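/- Let α, β, c be real parameters. For every real polynomial p there exists a real polynomial q with deg q ≤ deg p such that for every x ≠ 0, (L^{(α,β,c)} p)(x) = q(x); that is, the operator L^{(α,β,c)} maps polynomials to polynomials without increasing the degree. -/

import Mathlib

noncomputable section

open Polynomial

/-- The big -1 Jacobi operator `L^{(α,β,c)}`: acts on `f` at `x ≠ 0` by
`g₀(x)(f(-x) - f(x)) - g₁(x) f'(-x)`, where the last term is `g₁(x)` times the
value at `x` of the derivative of the reflected function `t ↦ f (-t)`,
which equals `-f'(-x)`. -/
noncomputable def Lop (α β c : ℝ) (f : ℝ → ℝ) (x : ℝ) : ℝ :=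
  ((α + β + 1) * x ^ 2 + (c * α - β) * x + c) / x ^ 2 * (f (-x) - f x)
    - (2 * (x - 1) * (x + c) / x) * deriv f (-x)

/-- The operator `L^{(α,β,c)}` maps polynomials to polynomials without
increasing the degree. -/
theorem L_preserves_polynomials (α β c : ℝ) (p : Polynomial ℝ) :
    ∃ q : Polynomial ℝ, q.degree ≤ p.degree ∧
      ∀ x : ℝ, x ≠ 0 → Lop α β c (fun t => p.eval t) x = q.eval x := by
  classical
  by_cases hp : p = 0
  · exact ⟨0, by simp [hp], fun x hx => by simp [hp, Lop]⟩
  set A : ℝ[X] := C (α + β + 1) * X ^ 2 + C (c * α - β) * X + C c with hA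
  set B : ℝ[X] := C 2 * (X - 1) * (X + C c) * X with hB
  set p1 : ℝ[X] := p.comp (-X) with hp1
  set d1 : ℝ[X] := p.derivative.comp (-X) with hd1
  set N : ℝ[X] := A * (p1 - p) - B * d1 with hN
  have h0 : N.eval 0 = 0 := by
    simp [hN, hA, hB, hp1, hd1]
  have h1 : (derivative N).eval 0 = 0 := by
    simp [hN, hA, hB, hp1, hd1, derivative_comp]
    ring
  obtain ⟨M, hM⟩ := (X_dvd_iff (f := N)).2 (by rw [coeff_zero_eq_eval_zero]; exact h0)
  have hM0 : M.eval 0 = 0 := by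
    have := congrArg (fun r => (derivative r).eval 0) hM
    simpa [h1] using this.symm
  obtain ⟨Q, hQ⟩ := (X_dvd_iff (f := M)).2 (by rw [coeff_zero_eq_eval_zero]; exact hM0)
  have hNQ : N = X ^ 2 * Q := by rw [hM, hQ]; ring
  have hdcomp : ∀ r : ℝ[X], (r.comp (-X)).degree = r.degree := by
    intro r
    by_cases hr : r = 0
    · simp [hr]
    have hne : r.comp (-X) ≠ 0 := fun h => hr (by
      have := congrArg (fun s => s.comp (-X)) h
      simpa [comp_assoc] using this)
    rw [degree_eq_natDegree hne, degree_eq_natDegree hr, natDegree_comp]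
    simp
  refine ⟨Q, ?_, ?_⟩
  · -- degree bound
    have hdA : A.degree ≤ 2 := by rw [hA]; compute_degree
    have hdB : B.degree ≤ 3 := by rw [hB]; compute_degree
    have hd1lt : d1.degree < p.degree := by
      rw [hd1, hdcomp]; exact degree_derivative_lt hp
    have hdN : N.degree ≤ p.degree + 2 := by
      refine (degree_sub_le _ _).trans (max_le ?_ ?_)
      · refine (degree_mul_le _ _).trans ?_
        have h1' : (p1 - p).degree ≤ p.degree :=
          (degree_sub_le _ _).trans (max_le (le_of_eq (hdcomp p)) le_rfl)
        calc A.degree + (p1 - p).degree ≤ 2 + p.degree := add_le_add hdA h1'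
          _ = p.degree + 2 := add_comm _ _
      · refine (degree_mul_le _ _).trans ?_
        have h2 : d1.degree + 1 ≤ p.degree := Nat.WithBot.add_one_le_of_lt hd1lt
        calc B.degree + d1.degree ≤ 3 + d1.degree := add_le_add_left hdB _
          _ = (d1.degree + 1) + 2 := by
            rw [add_comm, add_assoc]; rfl
          _ ≤ p.degree + 2 := add_le_add_left h2 2
    rw [hNQ, degree_mul, degree_X_pow] at hdN
    rw [add_comm] at hdN
    have h2b : ((2 : ℕ) : WithBot ℕ) = (2 : WithBot ℕ) := by norm_cast
    rw [h2b] at hdN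
    exact (WithBot.add_le_add_iff_right (by simp)).1 hdN
  · intro x hx
    have hNx : N.eval x = A.eval x * (p.eval (-x) - p.eval x)
        - B.eval x * p.derivative.eval (-x) := by
      simp [hN, hA, hB, hp1, hd1]
    have key : x ^ 2 * Q.eval x = ((α + β + 1) * x ^ 2 + (c * α - β) * x + c)
        * (p.eval (-x) - p.eval x)
        - (2 * (x - 1) * (x + c) * x) * p.derivative.eval (-x) := by
      have h : N.eval x = (X ^ 2 * Q).eval x := by rw [hNQ]
      rw [hNx] at h
      simp only [eval_mul, eval_pow, eval_X, eval_add, eval_sub, eval_C, eval_one,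
        eval_ofNat, hA, hB] at h
      linear_combination -h
    have hx2 : x ^ 2 ≠ 0 := pow_ne_zero _ hx
    have goal' : Lop α β c (fun t => eval t p) x = (x ^ 2 * eval x Q) / x ^ 2 := by
      rw [key]
      simp only [Lop, Polynomial.deriv]
      field_simp
    rw [goal', mul_div_cancel_left₀ _ hx2]
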